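/- Let A = (a,0) and B = (-a,0) with 0 < a < 1 be two points in the Beltrami–Klein model of the hyperbolic plane, and let P = (x,y) be a point with x² + y² < 1 and y ≠ 0. If the hyperbolic angle at P between the hyperbolic lines PA and PB equals π/2, then (x,y) satisfies x²/a² + y²(1+a²)/a² = 1. -/

import Mathlib

open Real

/-- Lorentzian bilinear form of signature (1,2) on coordinate triples. -/
def lor (u v : ℝ × ℝ × ℝ) : ℝ := -(u.1 * v.1) + u.2.1 * v.2.1 + u.2.2 * v.2.2

/-- If the hyperbolic angle at a proper point `P = (x,y)` between the lines `PA`, `PB`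
(for `A = (a,0)`, `B = (-a,0)` in the Beltrami–Klein model) is a right angle, then
`(x,y)` lies on the ellipse `x²/a² + y²(1+a²)/a² = 1`. -/
theorem stmt_0 (a x y u₁ u₂ v₁ v₂ : ℝ)
    (ha : 0 < a) (ha' : a < 1) (hP : x ^ 2 + y ^ 2 < 1) (hy : y ≠ 0)
    (hAu : 1 + a * u₁ + 0 * u₂ = 0)
    (hPu : 1 + x * u₁ + y * u₂ = 0)
    (hBv : 1 + (-a) * v₁ + 0 * v₂ = 0)
    (hPv : 1 + x * v₁ + y * v₂ = 0)
    (hangle : -(lor (1, u₁, u₂) (1, v₁, v₂)) /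
        Real.sqrt (lor (1, u₁, u₂) (1, u₁, u₂) * lor (1, v₁, v₂) (1, v₁, v₂))
        = Real.cos (π / 2)) :
    x ^ 2 / a ^ 2 + y ^ 2 * (1 + a ^ 2) / a ^ 2 = 1 := by
  have ha0 : a ≠ 0 := ne_of_gt ha
  have hu1 : u₁ = -1 / a := by
    field_simp
    linarith
  have hv1 : v₁ = 1 / a := by
    field_simp
    linarith
  have hu2 : u₂ = (x - a) / (a * y) := by
    rw [hu1] at hPu
    field_simp at hPu ⊢
    linarith
  have hv2 : v₂ = -(x + a) / (a * y) := by
    rw [hv1] at hPv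
    field_simp at hPv ⊢
    linarith
  have huu : 0 < lor (1, u₁, u₂) (1, u₁, u₂) := by
    simp only [lor, hu1]
    have h1 : 1 < (-1 / a) * (-1 / a) := by
      rw [div_mul_div_comm]
      rw [lt_div_iff₀ (by positivity)]
      nlinarith
    nlinarith [sq_nonneg u₂]
  have hvv : 0 < lor (1, v₁, v₂) (1, v₁, v₂) := by
    simp only [lor, hv1]
    have h1 : 1 < (1 / a) * (1 / a) := by
      rw [div_mul_div_comm]
      rw [lt_div_iff₀ (by positivity)]
      nlinarith
    nlinarith [sq_nonneg v₂]
  have hs : Real.sqrt (lor (1, u₁, u₂) (1, u₁, u₂) * lor (1, v₁, v₂) (1, v₁, v₂)) ≠ 0 := by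
    positivity
  rw [Real.cos_pi_div_two, div_eq_zero_iff] at hangle
  have hl : lor (1, u₁, u₂) (1, v₁, v₂) = 0 := by
    rcases hangle with h | h
    · linarith
    · exact absurd h hs
  simp only [lor, hu1, hv1, hu2, hv2] at hl
  field_simp at hl ⊢
  have h2 : a ^ 2 * (a ^ 2 - x ^ 2 - (1 + a ^ 2) * y ^ 2) = 0 := by linear_combination a ^ 2 * hl
  have h3 : a ^ 2 - x ^ 2 - (1 + a ^ 2) * y ^ 2 = 0 := by
    rcases mul_eq_zero.mp h2 with h | h
    · exact absurd h (by positivity)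
    · exact h
  nlinarith [h3]
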